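/- For every F ∈ ℝ^{2×2}, the squared Euclidean (Frobenius) distance of F to the conformal group CSO(2) satisfies inf{‖F − a·R‖² : a ∈ (0,∞), R ∈ SO(2)} = (1/2)·(‖F‖² − 2·det F). -/

import Mathlib

open Matrix MeasureTheory Set

noncomputable section

/-- The space of real 2×2 matrices. -/
abbrev Mat2 := Matrix (Fin 2) (Fin 2) ℝ

/-- Squared Frobenius norm of a 2×2 matrix. -/
def frobSq (F : Mat2) : ℝ := ∑ i, ∑ j, (F i j) ^ 2

/-- The special orthogonal group SO(2). -/
def SO2 (R : Mat2) : Prop := R.transpose * R = 1 ∧ R.det = 1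

/-- The conformal special orthogonal group CSO(2) = (0,∞)·SO(2). -/
def CSO2 (A : Mat2) : Prop := ∃ a : ℝ, 0 < a ∧ ∃ R : Mat2, SO2 R ∧ A = a • R

/-- Conformal invariance of an energy `W : GL⁺(2) → ℝ`. -/
def ConfInv (W : Mat2 → ℝ) : Prop :=
  ∀ F : Mat2, 0 < F.det → ∀ A B : Mat2, CSO2 A → CSO2 B → W (A * F * B) = W F

/-- `l1, l2` are the singular values of `F` (in either order): they are positive and their
product and sum of squares agree with `det F` and the squared Frobenius norm of `F`. -/
def SingVals (F : Mat2) (l1 l2 : ℝ) : Prop :=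
  0 < l1 ∧ 0 < l2 ∧ l1 * l2 = F.det ∧ l1 ^ 2 + l2 ^ 2 = frobSq F

/-- `l1 ≥ l2` are the ordered singular values of `F`. -/
def OrdSingVals (F : Mat2) (l1 l2 : ℝ) : Prop := SingVals F l1 l2 ∧ l2 ≤ l1

/-- The larger singular value of a 2×2 matrix with positive determinant. -/
def sv1 (F : Mat2) : ℝ :=
  Real.sqrt ((frobSq F + Real.sqrt (frobSq F ^ 2 - 4 * F.det ^ 2)) / 2)

/-- The smaller singular value of a 2×2 matrix with positive determinant. -/
def sv2 (F : Mat2) : ℝ :=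
  Real.sqrt ((frobSq F - Real.sqrt (frobSq F ^ 2 - 4 * F.det ^ 2)) / 2)

/-- The distortion 𝕂(F) = ‖F‖²/(2 det F). -/
def Kdist (F : Mat2) : ℝ := frobSq F / (2 * F.det)

/-- Rank-one convexity of an energy on GL⁺(2). -/
def RankOneConvex (W : Mat2 → ℝ) : Prop :=
  ∀ F : Mat2, 0 < F.det → ∀ H : Mat2, H.rank = 1 → 0 < (F + H).det →
    ∀ t : ℝ, 0 ≤ t → t ≤ 1 → W (F + t • H) ≤ (1 - t) * W F + t * W (F + H)

/-- The gradient (Jacobian matrix) of a map ϑ : ℝ² → ℝ². -/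
def gradMat (ϑ : (Fin 2 → ℝ) → (Fin 2 → ℝ)) (x : Fin 2 → ℝ) : Mat2 :=
  Matrix.of fun i j => fderiv ℝ ϑ x (Pi.single j 1) i

/-- Quasiconvexity of an energy on GL⁺(2). -/
def Quasiconvex2 (W : Mat2 → ℝ) : Prop :=
  ∀ Ω : Set (Fin 2 → ℝ), IsOpen Ω → Bornology.IsBounded Ω →
    ∀ F₀ : Mat2, 0 < F₀.det →
    ∀ ϑ : (Fin 2 → ℝ) → (Fin 2 → ℝ), ContDiff ℝ (⊤ : ℕ∞) ϑ → HasCompactSupport ϑ →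
      tsupport ϑ ⊆ Ω → (∀ x ∈ Ω, 0 < (F₀ + gradMat ϑ x).det) →
      W F₀ * (volume Ω).toReal ≤ ∫ x in Ω, W (F₀ + gradMat ϑ x)

/-- Polyconvexity of an energy on GL⁺(2): `W(F) = P(F, det F)` for some convex
function `P : ℝ^{2×2} × ℝ → ℝ ∪ {+∞}`. -/
def Polyconvex (W : Mat2 → ℝ) : Prop :=
  ∃ P : Mat2 × ℝ → EReal,
    (∀ X Y : Mat2 × ℝ, ∀ t : ℝ, 0 ≤ t → t ≤ 1 →
      P (t • X + (1 - t) • Y) ≤ (t : ℝ) * P X + ((1 - t : ℝ) : EReal) * P Y) ∧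
    (∀ F : Mat2, 0 < F.det → (W F : EReal) = P (F, F.det))

/-- The rank-one convex envelope of `W` on GL⁺(2). -/
def RWenv (W : Mat2 → ℝ) (F : Mat2) : ℝ :=
  sSup {y | ∃ w : Mat2 → ℝ, RankOneConvex w ∧ (∀ X : Mat2, 0 < X.det → w X ≤ W X) ∧ y = w F}

/-- The quasiconvex envelope of `W` on GL⁺(2). -/
def QWenv (W : Mat2 → ℝ) (F : Mat2) : ℝ :=
  sSup {y | ∃ w : Mat2 → ℝ, Quasiconvex2 w ∧ (∀ X : Mat2, 0 < X.det → w X ≤ W X) ∧ y = w F}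

/-- The polyconvex envelope of `W` on GL⁺(2). -/
def PWenv (W : Mat2 → ℝ) (F : Mat2) : ℝ :=
  sSup {y | ∃ w : Mat2 → ℝ, Polyconvex w ∧ (∀ X : Mat2, 0 < X.det → w X ≤ W X) ∧ y = w F}

/-- The monotone-convex envelope of `h : [1,∞) → ℝ`. -/
def CmEnv (h : ℝ → ℝ) (t : ℝ) : ℝ :=
  sSup {y | ∃ p : ℝ → ℝ, ConvexOn ℝ (Set.Ici (1 : ℝ)) p ∧ MonotoneOn p (Set.Ici (1 : ℝ)) ∧
    (∀ s : ℝ, 1 ≤ s → p s ≤ h s) ∧ y = p t}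

/-- The convex envelope of `h : [1,∞) → ℝ`. -/
def CEnv (h : ℝ → ℝ) (t : ℝ) : ℝ :=
  sSup {y | ∃ p : ℝ → ℝ, ConvexOn ℝ (Set.Ici (1 : ℝ)) p ∧
    (∀ s : ℝ, 1 ≤ s → p s ≤ h s) ∧ y = p t}

/-- The special orthogonal group SO(n). -/
def SOnN {n : ℕ} (R : Matrix (Fin n) (Fin n) ℝ) : Prop := R.transpose * R = 1 ∧ R.det = 1

/-- The conformal special orthogonal group CSO(n) = (0,∞)·SO(n). -/
def CSOnN {n : ℕ} (A : Matrix (Fin n) (Fin n) ℝ) : Prop :=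
  ∃ a : ℝ, 0 < a ∧ ∃ R : Matrix (Fin n) (Fin n) ℝ, SOnN R ∧ A = a • R

/-- Conformal invariance of an energy `W : GL⁺(n) → ℝ`. -/
def ConfInvN {n : ℕ} (W : Matrix (Fin n) (Fin n) ℝ → ℝ) : Prop :=
  ∀ F : Matrix (Fin n) (Fin n) ℝ, 0 < F.det →
    ∀ A B : Matrix (Fin n) (Fin n) ℝ, CSOnN A → CSOnN B → W (A * F * B) = W F

/-- Rank-one convexity of an energy on GL⁺(n). -/
def RankOneConvexN {n : ℕ} (W : Matrix (Fin n) (Fin n) ℝ → ℝ) : Prop :=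
  ∀ F : Matrix (Fin n) (Fin n) ℝ, 0 < F.det →
    ∀ H : Matrix (Fin n) (Fin n) ℝ, H.rank = 1 → 0 < (F + H).det →
    ∀ t : ℝ, 0 ≤ t → t ≤ 1 → W (F + t • H) ≤ (1 - t) * W F + t * W (F + H)

/-- The gradient (Jacobian matrix) of a map ϑ : ℝⁿ → ℝⁿ. -/
def gradMatN {n : ℕ} (ϑ : (Fin n → ℝ) → (Fin n → ℝ)) (x : Fin n → ℝ) :
    Matrix (Fin n) (Fin n) ℝ :=
  Matrix.of fun i j => fderiv ℝ ϑ x (Pi.single j 1) i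

/-- Quasiconvexity of an energy on GL⁺(n). -/
def QuasiconvexN {n : ℕ} (W : Matrix (Fin n) (Fin n) ℝ → ℝ) : Prop :=
  ∀ Ω : Set (Fin n → ℝ), IsOpen Ω → Bornology.IsBounded Ω →
    ∀ F₀ : Matrix (Fin n) (Fin n) ℝ, 0 < F₀.det →
    ∀ ϑ : (Fin n → ℝ) → (Fin n → ℝ), ContDiff ℝ (⊤ : ℕ∞) ϑ → HasCompactSupport ϑ →
      tsupport ϑ ⊆ Ω → (∀ x ∈ Ω, 0 < (F₀ + gradMatN ϑ x).det) →
      W F₀ * (volume Ω).toReal ≤ ∫ x in Ω, W (F₀ + gradMatN ϑ x)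

/-- The rank-one convex envelope of `W` on GL⁺(n). -/
def RWenvN {n : ℕ} (W : Matrix (Fin n) (Fin n) ℝ → ℝ) (F : Matrix (Fin n) (Fin n) ℝ) : ℝ :=
  sSup {y | ∃ w : Matrix (Fin n) (Fin n) ℝ → ℝ, RankOneConvexN w ∧
    (∀ X : Matrix (Fin n) (Fin n) ℝ, 0 < X.det → w X ≤ W X) ∧ y = w F}

/-- The quasiconvex envelope of `W` on GL⁺(n). -/
def QWenvN {n : ℕ} (W : Matrix (Fin n) (Fin n) ℝ → ℝ) (F : Matrix (Fin n) (Fin n) ℝ) : ℝ :=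
  sSup {y | ∃ w : Matrix (Fin n) (Fin n) ℝ → ℝ, QuasiconvexN w ∧
    (∀ X : Matrix (Fin n) (Fin n) ℝ, 0 < X.det → w X ≤ W X) ∧ y = w F}

end
lemma so2_entries {R : Mat2} (h : SO2 R) :
    R 1 1 = R 0 0 ∧ R 0 1 = - R 1 0 ∧ R 0 0 ^ 2 + R 1 0 ^ 2 = 1 := by
  obtain ⟨h1, h2⟩ := h
  have e1 : (R.transpose * R) 0 0 = (1 : Mat2) 0 0 := by rw [h1]
  have e2 : (R.transpose * R) 1 1 = (1 : Mat2) 1 1 := by rw [h1]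
  have e3 : (R.transpose * R) 0 1 = (1 : Mat2) 0 1 := by rw [h1]
  simp [Matrix.mul_apply, Fin.sum_univ_two, Matrix.transpose_apply, Matrix.one_apply] at e1 e2 e3
  rw [Matrix.det_fin_two] at h2
  refine ⟨?_, ?_, by nlinarith [sq_nonneg (R 0 0 - R 1 1), sq_nonneg (R 0 1 + R 1 0)]⟩ <;>
    nlinarith [sq_nonneg (R 0 0 - R 1 1), sq_nonneg (R 0 1 + R 1 0)]

lemma lb_aux (F : Mat2) {a : ℝ} (ha : 0 < a) {R : Mat2} (hR : SO2 R) :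
    (frobSq F - 2 * F.det) / 2 ≤ frobSq (F - a • R) := by
  obtain ⟨hd, hb, hn⟩ := so2_entries hR
  simp only [frobSq, Fin.sum_univ_two, Matrix.sub_apply, Matrix.smul_apply, smul_eq_mul,
    Matrix.det_fin_two, hd, hb]
  nlinarith [sq_nonneg (F 0 0 + F 1 1 - 2*a*R 0 0), sq_nonneg (F 1 0 - F 0 1 - 2*a*R 1 0),
    mul_pos ha ha, sq_nonneg a]

lemma so2_rot {c s : ℝ} (h : c^2 + s^2 = 1) : SO2 !![c, -s; s, c] := by
  constructor
  · ext i j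
    fin_cases i <;> fin_cases j <;>
      simp [Matrix.mul_apply, Fin.sum_univ_two, Matrix.transpose_apply, Matrix.one_apply,
        Matrix.vecHead, Matrix.vecTail] <;>
      nlinarith
  · simp [Matrix.det_fin_two]; nlinarith

lemma rot_val (F : Mat2) (a c s : ℝ) :
    frobSq (F - a • !![c, -s; s, c]) =
      (F 0 0 - a*c)^2 + (F 0 1 + a*s)^2 + (F 1 0 - a*s)^2 + (F 1 1 - a*c)^2 := by
  simp [frobSq, Fin.sum_univ_two]
  ring

/-- The squared Euclidean (Frobenius) distance of `F ∈ ℝ^{2×2}` to the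
conformal group CSO(2) equals `(‖F‖² − 2 det F)/2`. -/
theorem dist_sq_to_CSO2 (F : Mat2) :
    sInf {y : ℝ | ∃ a : ℝ, 0 < a ∧ ∃ R : Mat2, SO2 R ∧ y = frobSq (F - a • R)} =
      (frobSq F - 2 * F.det) / 2 := by
  set S := {y : ℝ | ∃ a : ℝ, 0 < a ∧ ∃ R : Mat2, SO2 R ∧ y = frobSq (F - a • R)} with hSdef
  have hSO1 : SO2 (1 : Mat2) := ⟨by simp, by simp⟩
  have hlb : ∀ y ∈ S, (frobSq F - 2 * F.det) / 2 ≤ y := by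
    rintro y ⟨a, ha, R, hR, rfl⟩; exact lb_aux F ha hR
  have hbdd : BddBelow S := ⟨_, hlb⟩
  have hne : S.Nonempty := ⟨frobSq (F - (1:ℝ) • (1:Mat2)), 1, one_pos, 1, hSO1, rfl⟩
  set p := F 0 0 + F 1 1 with hp
  set q := F 1 0 - F 0 1 with hq
  have hdet : F.det = F 0 0 * F 1 1 - F 0 1 * F 1 0 := Matrix.det_fin_two F
  have hfr : frobSq F = F 0 0 ^2 + F 0 1 ^2 + F 1 0 ^2 + F 1 1 ^2 := by
    simp [frobSq, Fin.sum_univ_two]; ring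
  refine le_antisymm ?_ (le_csInf hne hlb)
  by_cases h0 : p = 0 ∧ q = 0
  · refine le_of_forall_pos_le_add fun ε hε => ?_
    have haa : (0:ℝ) < Real.sqrt (ε/2) := Real.sqrt_pos.2 (by linarith)
    have hsq : Real.sqrt (ε/2)^2 = ε/2 := Real.sq_sqrt (by linarith)
    have hone : (1 : Mat2) = !![1, -0; 0, 1] := by
      ext i j; fin_cases i <;> fin_cases j <;> simp [Matrix.one_apply]
    have mem : frobSq (F - Real.sqrt (ε/2) • (1:Mat2)) ∈ S :=
      ⟨_, haa, 1, hSO1, rfl⟩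
    refine (csInf_le hbdd mem).trans (le_of_eq ?_)
    rw [hone, rot_val]
    obtain ⟨h1, h2⟩ := h0
    rw [hfr, hdet]
    nlinarith [hsq, h1, h2]
  · have hm2pos : 0 < p^2 + q^2 := by
      rcases (not_and_or.1 h0) with h | h <;> positivity
    set m := Real.sqrt (p^2 + q^2) with hmdef
    have hm : m^2 = p^2 + q^2 := Real.sq_sqrt hm2pos.le
    have hmpos : 0 < m := Real.sqrt_pos.2 hm2pos
    have hrot : SO2 !![p/m, -(q/m); q/m, p/m] := so2_rot (by field_simp; linarith [hm])
    have mem : frobSq (F - (m/2) • !![p/m, -(q/m); q/m, p/m]) ∈ S :=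
      ⟨m/2, by positivity, _, hrot, rfl⟩
    refine (csInf_le hbdd mem).trans (le_of_eq ?_)
    rw [rot_val]
    have e1 : m/2 * (p/m) = p/2 := by field_simp
    have e2 : m/2 * (q/m) = q/2 := by field_simp
    rw [e1, e2, hfr, hdet]
    ring
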